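/- arXiv:2602.03259 — 3 statements merged into one kernel-verified Lean document; each statement's English description precedes it below -/
import Mathlib

section
/- If φ is a strong odd coloring of the join C_n ∨ K̄_m (n ≥ 3, m ≥ 1), then the restriction of φ to the vertices of the cycle C_n is a 2-distance coloring of C_n, i.e., any two distinct vertices of C_n at distance at most 2 in C_n receive different colors. -/
open SimpleGraph

/-- A coloring `φ` of the vertices of `G` is a strong odd coloring if it is proper and,
for every vertex `v` and every color `c`, the number of neighbors of `v` colored `c`
is either zero or odd. -/
def IsStrongOddColoring {V α : Type*} (G : SimpleGraph V) (φ : V → α) : Prop :=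
  (∀ u v : V, G.Adj u v → φ u ≠ φ v) ∧
  ∀ (v : V) (c : α),
    {u : V | G.Adj v u ∧ φ u = c}.ncard = 0 ∨ Odd {u : V | G.Adj v u ∧ φ u = c}.ncard

/-- The strong odd chromatic number: the least `k` such that `G` admits a strong odd
coloring with `k` colors. -/
noncomputable def strongOddChromaticNumber {V : Type*} (G : SimpleGraph V) : ℕ :=
  sInf {k : ℕ | ∃ φ : V → Fin k, IsStrongOddColoring G φ}

/-- The join `G ∨ H` of two graphs: disjoint copies of `G` and `H` together with all
edges between them. -/
def joinGraph {V W : Type*} (G : SimpleGraph V) (H : SimpleGraph W) :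
    SimpleGraph (V ⊕ W) where
  Adj x y :=
    match x, y with
    | Sum.inl a, Sum.inl b => G.Adj a b
    | Sum.inl _, Sum.inr _ => True
    | Sum.inr _, Sum.inl _ => True
    | Sum.inr a, Sum.inr b => H.Adj a b
  symm := by refine ⟨?_⟩; rintro (a | a) (b | b) h <;> first | exact h.symm | trivial
  loopless := by refine ⟨?_⟩; rintro (a | a) h <;> first | exact G.irrefl h | exact H.irrefl h

/-- The wheel graph `W_n = C_n ∨ K_1`. -/
def wheelGraph (n : ℕ) : SimpleGraph (Fin n ⊕ Fin 1) :=
  joinGraph (cycleGraph n) (⊥ : SimpleGraph (Fin 1))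

/-- `G_n = C_n ∨ K̄_2`; the two vertices of `K̄_2` are `x_n = Sum.inr 0` and
`y_n = Sum.inr 1`. -/
def cycleJoinTwo (n : ℕ) : SimpleGraph (Fin n ⊕ Fin 2) :=
  joinGraph (cycleGraph n) (⊥ : SimpleGraph (Fin 2))

/-- The one point union of graphs `G` and `H`, obtained by identifying the vertex
`a` of `G` with the vertex `b` of `H` (the identified vertex is `Sum.inl a`). -/
def onePointUnion {V W : Type*} (G : SimpleGraph V) (H : SimpleGraph W) (a : V) (b : W) :
    SimpleGraph (V ⊕ {w : W // w ≠ b}) where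
  Adj x y :=
    match x, y with
    | Sum.inl u, Sum.inl v => G.Adj u v
    | Sum.inl u, Sum.inr v => u = a ∧ H.Adj b v.1
    | Sum.inr v, Sum.inl u => u = a ∧ H.Adj b v.1
    | Sum.inr u, Sum.inr v => H.Adj u.1 v.1
  symm := by
    refine ⟨?_⟩
    rintro (u | u) (v | v) h
    · exact h.symm
    · exact h
    · exact h
    · exact h.symm
  loopless := by
    refine ⟨?_⟩
    rintro (u | u) h
    · exact G.irrefl h
    · exact H.irrefl h

/-- `I_y(G_m, G_n)`: the one point union of `G_m = C_m ∨ K̄_2` and `G_n = C_n ∨ K̄_2`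
obtained by identifying the vertices `y_m` and `y_n`. -/
def Iy (m n : ℕ) :
    SimpleGraph ((Fin m ⊕ Fin 2) ⊕ {w : Fin n ⊕ Fin 2 // w ≠ Sum.inr 1}) :=
  onePointUnion (cycleJoinTwo m) (cycleJoinTwo n) (Sum.inr 1) (Sum.inr 1)

/-- A planar embedding of a graph `G`: an injective placement of the vertices in the
plane together with, for each edge, an arc (injective path) joining the images of its
endpoints, such that arcs do not pass through images of other vertices and two arcs of
distinct edges meet only in common endpoints. -/
structure PlanarEmbedding {V : Type*} (G : SimpleGraph V) where
  vmap : V → ℝ × ℝ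
  vmap_inj : Function.Injective vmap
  arc : ∀ u v : V, G.Adj u v → Path (vmap u) (vmap v)
  arc_symm : ∀ (u v : V) (h : G.Adj u v), arc v u h.symm = (arc u v h).symm
  arc_inj : ∀ (u v : V) (h : G.Adj u v), Function.Injective (arc u v h)
  arc_vertex : ∀ (u v : V) (h : G.Adj u v) (w : V),
    vmap w ∈ Set.range (arc u v h) → w = u ∨ w = v
  arc_disjoint : ∀ (u v u' v' : V) (h : G.Adj u v) (h' : G.Adj u' v'),
    s(u, v) ≠ s(u', v') →
    Set.range (arc u v h) ∩ Set.range (arc u' v' h') ⊆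
      ({vmap u, vmap v} ∩ {vmap u', vmap v'} : Set (ℝ × ℝ))

/-- A graph is planar if it admits a planar embedding. -/
def IsPlanar {V : Type*} (G : SimpleGraph V) : Prop :=
  Nonempty (PlanarEmbedding G)

lemma cycle_key {n : ℕ} {z x : Fin (n + 2)} (h : (cycleGraph (n + 2)).Adj z x) :
    x = z + 1 ∨ x = z - 1 := by
  rw [cycleGraph_adj] at h
  rcases h with h | h
  · right
    rw [eq_sub_iff_add_eq, ← h]
    abel
  · left
    rw [sub_eq_iff_eq_add] at h
    exact h.trans (add_comm 1 z)

lemma exists_mid {V : Type*} {G : SimpleGraph V} {u v : V} (p : G.Walk u v)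
    (hp : p.length = 2) : ∃ z, G.Adj u z ∧ G.Adj z v := by
  match p, hp with
  | .cons h (.cons h' .nil), _ => exact ⟨_, h, h'⟩

/-- A strong odd coloring of `C_n ∨ K̄_m` (`n ≥ 3`, `m ≥ 1`), restricted to the cycle
`C_n`, is a 2-distance coloring of `C_n`: distinct cycle vertices at distance at most 2
in `C_n` receive different colors. -/
theorem stmt_1 (n m : ℕ) (hn : 3 ≤ n) (hm : 1 ≤ m) {α : Type*}
    (φ : Fin n ⊕ Fin m → α)
    (hφ : IsStrongOddColoring (joinGraph (cycleGraph n) (⊥ : SimpleGraph (Fin m))) φ) :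
    ∀ u v : Fin n, u ≠ v → (cycleGraph n).dist u v ≤ 2 →
      φ (Sum.inl u) ≠ φ (Sum.inl v) := by
  obtain ⟨k, rfl⟩ : ∃ k, n = k + 2 := ⟨n - 2, by omega⟩
  intro u v huv hdist heq
  by_cases hadj : (cycleGraph (k + 2)).Adj u v
  · exact hφ.1 (Sum.inl u) (Sum.inl v) hadj heq
  · have hd0 : (cycleGraph (k + 2)).dist u v ≠ 0 := by
      rw [dist_ne_zero_iff_ne_and_reachable]
      exact ⟨huv, (cycleGraph_connected (n := k + 1)) u v⟩
    have hd1 : (cycleGraph (k + 2)).dist u v ≠ 1 := fun h =>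
      hadj (dist_eq_one_iff_adj.mp h)
    have hd : (cycleGraph (k + 2)).dist u v = 2 := by omega
    obtain ⟨p, hp⟩ := exists_walk_of_dist_ne_zero hd0
    rw [hd] at hp
    obtain ⟨z, huz, hzv⟩ := exists_mid p hp
    have hodd := hφ.2 (Sum.inl z) (φ (Sum.inl u))
    have hset : {x | (joinGraph (cycleGraph (k + 2)) (⊥ : SimpleGraph (Fin m))).Adj
        (Sum.inl z) x ∧ φ x = φ (Sum.inl u)} = {Sum.inl u, Sum.inl v} := by
      ext x
      constructor
      · rintro ⟨hax, hx⟩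
        cases x with
        | inl a =>
          have ha : (cycleGraph (k + 2)).Adj z a := hax
          have key : a = u ∨ a = v := by
            rcases cycle_key ha with rfl | rfl <;>
              rcases cycle_key huz.symm with h1 | h1 <;>
              rcases cycle_key hzv with h2 | h2 <;>
              first
                | exact Or.inl h1.symm
                | exact Or.inr h2.symm
                | exact absurd (h1.trans h2.symm) huv
          rcases key with rfl | rfl <;> simp
        | inr b =>
          exact absurd (hx.symm) (hφ.1 (Sum.inl u) (Sum.inr b) trivial)
      · rintro (rfl | rfl)
        · exact ⟨huz.symm, rfl⟩
        · exact ⟨hzv, heq.symm⟩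
    rw [hset] at hodd
    have h2 : ({Sum.inl u, Sum.inl v} : Set (Fin (k + 2) ⊕ Fin m)).ncard = 2 :=
      Set.ncard_pair (by simpa using huv)
    rw [h2] at hodd
    rcases hodd with h | h
    · omega
    · rw [Nat.odd_iff] at h; omega
end

section
/- If n > 8 and n ≡ 1 or 5 (mod 6), then the strong odd chromatic number of the wheel W_n = C_n ∨ K_1 equals 6. -/
open SimpleGraph

open Finset
open scoped Fin.CommRing Fin.NatCast

def pat (a : ℕ) : Fin 6 := if a % 3 = 0 then 0 else if a % 3 = 1 then 1 else 2

lemma pat_ne {x y : ℕ} (h : x % 3 ≠ y % 3) : pat x ≠ pat y := by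
  unfold pat
  split_ifs <;> first | omega | decide

def fcol (p : ℕ) (t : ℕ → Fin 6) (a : ℕ) : Fin 6 := if a < p then pat a else t (a - p)

lemma fcol_lt {p : ℕ} {t : ℕ → Fin 6} {a : ℕ} (h : a < p) : fcol p t a = pat a := by
  simp [fcol, h]

lemma fcol_ge {p : ℕ} {t : ℕ → Fin 6} {a : ℕ} (h : p ≤ a) : fcol p t a = t (a - p) := by
  simp [fcol, Nat.not_lt.mpr h]

lemma gen_P1 (p L : ℕ) (t : ℕ → Fin 6) (hp3 : p % 3 = 0) (hp : 3 ≤ p) (hL : 2 ≤ L)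
    (ht1 : ∀ j, j + 1 < L → t j ≠ t (j + 1))
    (hb1 : t 0 ≠ 2) (hb2 : t (L - 1) ≠ 0) :
    ∀ a < p + L, fcol p t a ≠ fcol p t ((a + 1) % (p + L)) := by
  intro a ha
  rcases lt_trichotomy (a + 1) p with h | h | h
  · rw [Nat.mod_eq_of_lt (by omega), fcol_lt (by omega), fcol_lt h]
    exact pat_ne (by omega)
  · -- a = p - 1
    rw [Nat.mod_eq_of_lt (by omega), fcol_lt (by omega), fcol_ge (by omega), show a + 1 - p = 0 by omega]
    have : pat a = 2 := by unfold pat; have : a % 3 = 2 := by omega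
                           simp [this]
    rw [this]; exact fun hc => hb1 hc.symm
  · rcases lt_trichotomy (a + 1) (p + L) with h2 | h2 | h2
    · rw [Nat.mod_eq_of_lt h2, fcol_ge (by omega), fcol_ge (by omega)]
      have : a + 1 - p = (a - p) + 1 := by omega
      rw [this]; exact ht1 _ (by omega)
    · have ha' : a = p + L - 1 := by omega
      rw [h2, Nat.mod_self, fcol_ge (by omega), fcol_lt (by omega)]
      have e1 : a - p = L - 1 := by omega
      have e2 : pat 0 = 0 := by decide
      rw [e1, e2]; exact hb2
    · omega

lemma gen_P2 (p L : ℕ) (t : ℕ → Fin 6) (hp3 : p % 3 = 0) (hp : 3 ≤ p) (hL : 2 ≤ L)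
    (ht2 : ∀ j, j + 2 < L → t j ≠ t (j + 2))
    (hb1 : t 0 ≠ 1) (hb2 : t 1 ≠ 2) (hb3 : t (L - 2) ≠ 0) (hb4 : t (L - 1) ≠ 1) :
    ∀ a < p + L, fcol p t a ≠ fcol p t ((a + 2) % (p + L)) := by
  intro a ha
  rcases lt_trichotomy (a + 2) p with h | h | h
  · rw [Nat.mod_eq_of_lt (by omega), fcol_lt (by omega), fcol_lt h]
    exact pat_ne (by omega)
  · -- a = p - 2
    rw [Nat.mod_eq_of_lt (by omega), fcol_lt (by omega), fcol_ge (by omega), show a + 2 - p = 0 by omega]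
    have hav : pat a = 1 := by
      have : a % 3 = 1 := by omega
      unfold pat; simp [this]
    rw [hav]; exact fun hc => hb1 hc.symm
  · rcases Nat.lt_or_ge a p with h3 | h3
    · -- a = p - 1
      have ha1 : a = p - 1 := by omega
      rw [Nat.mod_eq_of_lt (by omega), fcol_lt h3, fcol_ge (by omega)]
      have e : a + 2 - p = 1 := by omega
      have hav : pat a = 2 := by
        have : a % 3 = 2 := by omega
        unfold pat; simp [this]
      rw [e, hav]; exact fun hc => hb2 hc.symm
    · rcases lt_trichotomy (a + 2) (p + L) with h2 | h2 | h2
      · rw [Nat.mod_eq_of_lt h2, fcol_ge h3, fcol_ge (by omega)]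
        have : a + 2 - p = (a - p) + 2 := by omega
        rw [this]; exact ht2 _ (by omega)
      · -- a = p + L - 2
        rw [h2, Nat.mod_self, fcol_ge h3, fcol_lt (by omega)]
        have e1 : a - p = L - 2 := by omega
        have e2 : pat 0 = 0 := by decide
        rw [e1, e2]; exact hb3
      · -- a = p + L - 1
        have e0 : (a + 2) % (p + L) = 1 := by
          have : a + 2 = (p + L) + 1 := by omega
          rw [this, Nat.add_mod_left, Nat.mod_eq_of_lt (by omega)]
        rw [e0, fcol_ge h3, fcol_lt (by omega)]
        have e1 : a - p = L - 1 := by omega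
        have e2 : pat 1 = 1 := by decide
        rw [e1, e2]; exact hb4
open Finset in
lemma pat_congr {x y : ℕ} (h : x % 3 = y % 3) : pat x = pat y := by
  unfold pat; rw [h]

open Finset in
lemma pat_count (v : Fin 6) (m : ℕ) :
    (∑ a ∈ range (3 * m), if pat a = v then 1 else 0)
      = m * ∑ r ∈ range 3, (if pat r = v then 1 else 0) := by
  induction m with
  | zero => simp
  | succ m ih =>
      have h3 : 3 * (m + 1) = 3 * m + 3 := by ring
      rw [h3, Finset.sum_range_add, ih]
      have he : (∑ x ∈ range 3, if pat (3 * m + x) = v then 1 else 0)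
          = ∑ r ∈ range 3, (if pat r = v then 1 else 0) := by
        apply Finset.sum_congr rfl
        intro r _
        rw [pat_congr (show (3 * m + r) % 3 = r % 3 by omega)]
      rw [he]; ring
section AuxSOC
open Finset SimpleGraph

lemma wheel_adj_ll {n : ℕ} {a b : Fin n} :
    (wheelGraph n).Adj (Sum.inl a) (Sum.inl b) ↔ (cycleGraph n).Adj a b := Iff.rfl

lemma wheel_adj_lr {n : ℕ} {a : Fin n} {b : Fin 1} :
    (wheelGraph n).Adj (Sum.inl a) (Sum.inr b) := trivial

lemma wheel_adj_rl {n : ℕ} {a : Fin n} {b : Fin 1} :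
    (wheelGraph n).Adj (Sum.inr b) (Sum.inl a) := trivial

lemma wheel_adj_rr {n : ℕ} {a b : Fin 1} :
    ¬ (wheelGraph n).Adj (Sum.inr a) (Sum.inr b) := fun h => h.elim

lemma fin_val_one' {n : ℕ} [NeZero n] (hn : 2 ≤ n) : ((1 : Fin n)).val = 1 := by
  simp [Fin.val_one', Nat.mod_eq_of_lt hn]

lemma cyc_adj_iff {n : ℕ} [NeZero n] (hn : 3 ≤ n) (i j : Fin n) :
    (cycleGraph n).Adj i j ↔ j = i - 1 ∨ j = i + 1 := by
  rw [cycleGraph_adj']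
  have h1 : ((1 : Fin n)).val = 1 := fin_val_one' (by omega)
  constructor
  · rintro (h | h)
    · left
      have h2 : i - j = 1 := Fin.ext (by rw [h1]; exact h)
      have h3 : j = i - (i - j) := by ring
      rw [h3, h2]
    · right
      have h2 : j - i = 1 := Fin.ext (by rw [h1]; exact h)
      have h3 : j = i + (j - i) := by ring
      rw [h3, h2]
  · rintro (h | h)
    · left; rw [h]
      have h3 : i - (i - 1) = (1 : Fin n) := by ring
      rw [h3, h1]
    · right; rw [h]
      have h3 : i + 1 - i = (1 : Fin n) := by ring
      rw [h3, h1]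

lemma val_add_nat {n : ℕ} [NeZero n] (i : Fin n) (k : ℕ) :
    ((i + (k : Fin n)).val) = (i.val + k) % n := by
  rw [Fin.add_def, Fin.val_natCast, Nat.add_mod i.val k, Nat.mod_eq_of_lt i.isLt]

lemma fin_two_ne_zero {n : ℕ} [NeZero n] (hn : 3 ≤ n) : (2 : Fin n) ≠ 0 := by
  intro h
  have h2 : ((2 : ℕ) : Fin n) = (2 : Fin n) := by norm_cast
  have := congrArg Fin.val (h2.trans h)
  rw [Fin.val_natCast, Fin.val_zero] at this
  rw [Nat.mod_eq_of_lt (by omega : 2 < n)] at this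
  exact two_ne_zero this

/-- Conversion of ncard of a Fin-indexed set to a range filter card. -/
lemma ncard_fin_set {n : ℕ} (q : ℕ → Fin 6) (c : Fin 6) :
    {i : Fin n | q i.val = c}.ncard = ((range n).filter (fun a => q a = c)).card := by
  classical
  rw [Set.ncard_eq_toFinset_card', Set.toFinset_setOf, card_filter, card_filter,
    Fin.sum_univ_eq_sum_range (fun a => if q a = c then 1 else 0)]

/-- The main assembly lemma: from combinatorial properties of `f : ℕ → Fin 6`,
a strong odd coloring of the wheel. -/
lemma assemble (n : ℕ) (hn : 3 ≤ n) (f : ℕ → Fin 6)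
    (P1 : ∀ a < n, f a ≠ f ((a + 1) % n))
    (P2 : ∀ a < n, f a ≠ f ((a + 2) % n))
    (P3 : ∀ a < n, f a ≠ 5)
    (C : ∀ v : Fin 6, ((range n).filter (fun a => f a = v)).card = 0 ∨
        Odd ((range n).filter (fun a => f a = v)).card) :
    IsStrongOddColoring (wheelGraph n)
      (Sum.elim (fun i : Fin n => f i.val) (fun _ => (5 : Fin 6))) := by
  classical
  haveI : NeZero n := ⟨by omega⟩
  set φ : Fin n ⊕ Fin 1 → Fin 6 :=
    Sum.elim (fun i : Fin n => f i.val) (fun _ => (5 : Fin 6)) with hφ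
  have hval1 : ∀ i : Fin n, (i + 1).val = (i.val + 1) % n := by
    intro i
    have := val_add_nat i 1
    simpa using this
  have key1 : ∀ i : Fin n, f i.val ≠ f ((i + 1).val) := by
    intro i; rw [hval1]; exact P1 i.val i.isLt
  have key2 : ∀ i : Fin n, f i.val ≠ f ((i + 2).val) := by
    intro i
    have h2 : ((2 : ℕ) : Fin n) = (2 : Fin n) := by norm_cast
    have := val_add_nat i 2
    rw [h2] at this
    rw [this]; exact P2 i.val i.isLt
  constructor
  · rintro (i | b) (j | b') hadj
    · rw [wheel_adj_ll, cyc_adj_iff hn] at hadj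
      show f i.val ≠ f j.val
      rcases hadj with h | h
      · subst h
        intro hc
        exact key1 (i - 1) (by rw [sub_add_cancel]; exact hc.symm)
      · subst h; exact key1 i
    · exact P3 i.val i.isLt
    · exact fun hc => P3 j.val j.isLt hc.symm
    · exact absurd hadj wheel_adj_rr
  · rintro (i | b) c
    · -- cycle vertex
      set S : Set (Fin n ⊕ Fin 1) :=
        {u | (wheelGraph n).Adj (Sum.inl i) u ∧ φ u = c} with hS
      have hmem : ∀ u ∈ S,
          u = Sum.inl (i - 1) ∨ u = Sum.inl (i + 1) ∨ u = Sum.inr 0 := by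
        rintro (j | b) ⟨hadj, _⟩
        · rw [wheel_adj_ll, cyc_adj_iff hn] at hadj
          rcases hadj with h | h
          · left; rw [h]
          · right; left; rw [h]
        · right; right; rw [Subsingleton.elim b 0]
      have hAB : f ((i - 1).val) ≠ f ((i + 1).val) := by
        have h : i - 1 + 2 = i + 1 := by ring
        intro hc
        exact key2 (i - 1) (by rw [h]; exact hc)
      have hA5 : f ((i - 1).val) ≠ 5 := P3 _ (i - 1).isLt
      have hB5 : f ((i + 1).val) ≠ 5 := P3 _ (i + 1).isLt
      have hsub : S.Subsingleton := by
        intro u hu u' hu'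
        have hu2 := hu.2
        have hu2' := hu'.2
        rcases hmem u hu with rfl | rfl | rfl <;>
          rcases hmem u' hu' with rfl | rfl | rfl <;>
            simp only [hφ, Sum.elim_inl, Sum.elim_inr] at hu2 hu2' <;>
              first
                | rfl
                | (exact absurd (hu2.trans hu2'.symm) hAB)
                | (exact absurd (hu2'.trans hu2.symm) hAB)
                | (exact absurd (hu2.trans hu2'.symm) hA5)
                | (exact absurd (hu2'.trans hu2.symm) hA5)
                | (exact absurd (hu2.trans hu2'.symm) hB5)
                | (exact absurd (hu2'.trans hu2.symm) hB5)
      rcases S.eq_empty_or_nonempty with hSe | ⟨x, hx⟩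
      · left; rw [hSe]; exact Set.ncard_empty _
      · right
        have : S = {x} := by
          ext y; constructor
          · intro hy; exact hsub hy hx
          · rintro rfl; exact hx
        rw [this, Set.ncard_singleton]; exact odd_one
    · -- hub vertex
      have hSeq : {u | (wheelGraph n).Adj (Sum.inr b) u ∧ φ u = c}
          = Sum.inl '' {i : Fin n | f i.val = c} := by
        ext u
        constructor
        · rintro ⟨hadj, hc⟩
          cases u with
          | inl j => exact ⟨j, hc, rfl⟩
          | inr b' => exact absurd hadj wheel_adj_rr
        · rintro ⟨j, hj, rfl⟩
          exact ⟨wheel_adj_rl, hj⟩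
      rw [hSeq, Set.ncard_image_of_injective _ Sum.inl_injective, ncard_fin_set]
      exact C c

end AuxSOC
section No5
open Finset SimpleGraph

lemma soc_comp_inj {V α β : Type*} (G : SimpleGraph V) (φ : V → α) (e : α → β)
    (he : Function.Injective e) (h : IsStrongOddColoring G φ) :
    IsStrongOddColoring G (e ∘ φ) := by
  obtain ⟨h1, h2⟩ := h
  refine ⟨fun u v huv hc => h1 u v huv (he hc), fun v c => ?_⟩
  by_cases hc : ∃ c', e c' = c
  · obtain ⟨c', rfl⟩ := hc
    have hset : {u | G.Adj v u ∧ (e ∘ φ) u = e c'} = {u | G.Adj v u ∧ φ u = c'} := by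
      ext u
      exact and_congr_right fun _ => ⟨fun h => he h, congrArg e⟩
    rw [hset]; exact h2 v c'
  · left
    have hset : {u | G.Adj v u ∧ (e ∘ φ) u = c} = ∅ := by
      ext u
      simp only [Set.mem_setOf_eq, Set.mem_empty_iff_false, iff_false, not_and]
      exact fun _ hh => hc ⟨φ u, hh⟩
    rw [hset]; exact Set.ncard_empty _

lemma no5 (n : ℕ) (h8 : 8 < n) (hodd : n % 2 = 1) (h3 : ¬ 3 ∣ n) :
    ¬ ∃ φ : Fin n ⊕ Fin 1 → Fin 5, IsStrongOddColoring (wheelGraph n) φ := by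
  classical
  haveI : NeZero n := ⟨by omega⟩
  rintro ⟨φ, hp, ho⟩
  set g : Fin n → Fin 5 := fun i => φ (Sum.inl i) with hg
  set c5 : Fin 5 := φ (Sum.inr 0) with hc5
  have hadj1 : ∀ i : Fin n, (cycleGraph n).Adj i (i + 1) := by
    intro i; rw [cyc_adj_iff (by omega)]; right; rfl
  have hadjm : ∀ i : Fin n, (cycleGraph n).Adj i (i - 1) := by
    intro i; rw [cyc_adj_iff (by omega)]; left; rfl
  have hprop : ∀ i : Fin n, g i ≠ g (i + 1) :=
    fun i => hp _ _ (wheel_adj_ll.mpr (hadj1 i))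
  have hne5 : ∀ i : Fin n, g i ≠ c5 := by
    intro i
    exact hp (Sum.inl i) (Sum.inr 0) wheel_adj_lr
  have h2ne : (2 : Fin n) ≠ 0 := fin_two_ne_zero (by omega)
  -- square condition
  have hsq : ∀ i : Fin n, g (i - 1) ≠ g (i + 1) := by
    intro i hcon
    have hSeq : {u | (wheelGraph n).Adj (Sum.inl i) u ∧ φ u = g (i - 1)}
        = {Sum.inl (i - 1), Sum.inl (i + 1)} := by
      ext u
      constructor
      · rintro ⟨hadj', hcc⟩
        cases u with
        | inl j =>
            rw [wheel_adj_ll, cyc_adj_iff (by omega)] at hadj'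
            rcases hadj' with h | h
            · simp [h]
            · simp [h]
        | inr b =>
            exfalso
            have hb : φ (Sum.inr b) = c5 := by
              rw [hc5]; congr 1; rw [Subsingleton.elim b 0]
            rw [hb] at hcc
            exact hne5 (i - 1) hcc.symm
      · rintro (rfl | rfl)
        · exact ⟨wheel_adj_ll.mpr (hadjm i), rfl⟩
        · exact ⟨wheel_adj_ll.mpr (hadj1 i), hcon.symm⟩
    have hne : Sum.inl (i - 1) ≠ (Sum.inl (i + 1) : Fin n ⊕ Fin 1) := by
      intro hh
      apply h2ne
      have h4 : i - 1 = i + 1 := Sum.inl_injective hh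
      have : (2 : Fin n) = (i + 1) - (i - 1) := by ring
      rw [this, ← h4, sub_self]
    have hcard := ho (Sum.inl i) (g (i - 1))
    rw [hSeq, Set.ncard_pair hne] at hcard
    rcases hcard with h | h
    · omega
    · rw [Nat.odd_iff] at h; omega
  -- color class sizes
  set N : Fin 5 → ℕ := fun c => (univ.filter (fun i : Fin n => g i = c)).card with hN
  have hNcard : ∀ c : Fin 5, {i : Fin n | g i = c}.ncard = N c := by
    intro c
    rw [Set.ncard_eq_toFinset_card', Set.toFinset_setOf]
  have hNodd : ∀ c : Fin 5, N c = 0 ∨ Odd (N c) := by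
    intro c
    have hSeq : {u | (wheelGraph n).Adj (Sum.inr 0) u ∧ φ u = c}
        = Sum.inl '' {i : Fin n | g i = c} := by
      ext u
      constructor
      · rintro ⟨hadj', hcc⟩
        cases u with
        | inl j => exact ⟨j, hcc, rfl⟩
        | inr b => exact absurd hadj' wheel_adj_rr
      · rintro ⟨j, hj, rfl⟩
        exact ⟨wheel_adj_rl, hj⟩
    have := ho (Sum.inr 0) c
    rwa [hSeq, Set.ncard_image_of_injective _ Sum.inl_injective, hNcard] at this
  have hsum : ∑ c : Fin 5, N c = n := by
    rw [hN]
    have := Finset.card_eq_sum_card_fiberwise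
      (f := g) (s := (univ : Finset (Fin n))) (t := (univ : Finset (Fin 5)))
      (fun x _ => mem_univ _)
    rw [← this, card_univ, Fintype.card_fin]
  set U : Finset (Fin 5) := univ.filter (fun c => N c ≠ 0) with hU
  have hUsum : ∑ c ∈ U, N c = n := by
    rw [← hsum]
    apply Finset.sum_subset (subset_univ U)
    intro c _ hcU
    by_contra hne
    exact hcU (by simp [hU, hne])
  have hUcard_odd : U.card % 2 = 1 := by
    have hmod : (∑ c ∈ U, N c) % 2 = (∑ c ∈ U, 1) % 2 := by
      rw [Finset.sum_nat_mod, Finset.sum_nat_mod U 2 (fun _ => 1)]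
      congr 1
      apply Finset.sum_congr rfl
      intro c hc
      have hc' : N c ≠ 0 := by
        have := Finset.mem_filter.mp hc
        exact this.2
      rcases hNodd c with h | h
      · exact absurd h hc'
      · rw [Nat.odd_iff] at h; rw [h]
    rw [hUsum, Finset.sum_const, smul_eq_mul, mul_one] at hmod
    omega
  have hNc5 : N c5 = 0 := by
    rw [hN]
    simp only [Finset.card_eq_zero, Finset.filter_eq_empty_iff]
    intro i _
    exact hne5 i
  have hc5U : c5 ∉ U := by simp [hU, hNc5]
  have hUsub : U ⊆ univ.erase c5 := by
    intro c hcU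
    exact Finset.mem_erase.mpr ⟨fun h => hc5U (h ▸ hcU), mem_univ c⟩
  have hUle : U.card ≤ 4 := by
    have := Finset.card_le_card hUsub
    rwa [Finset.card_erase_of_mem (mem_univ c5), card_univ, Fintype.card_fin] at this
  have hgU : ∀ i : Fin n, g i ∈ U := by
    intro i
    rw [hU, mem_filter]
    refine ⟨mem_univ _, ?_⟩
    rw [hN]
    simp only [ne_eq, Finset.card_eq_zero, Finset.filter_eq_empty_iff, not_forall]
    exact ⟨i, by simp⟩
  have hU13 : U.card = 1 ∨ U.card = 3 := by omega
  rcases hU13 with h1 | h13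
  · obtain ⟨c, hc⟩ := Finset.card_eq_one.mp h1
    have e0 : g 0 = c := by have := hgU 0; rw [hc] at this; simpa using this
    have e1 : g (0 + 1) = c := by have := hgU (0 + 1); rw [hc] at this; simpa using this
    exact hprop 0 (e0.trans e1.symm)
  · -- |U| = 3 : periodicity
    have hthree : ∀ i : Fin n, g (i + 3) = g i := by
      intro i
      have hd1 : g i ≠ g (i + 1) := hprop i
      have hd2 : g (i + 1) ≠ g (i + 2) := by
        have := hprop (i + 1)
        rwa [show i + 1 + 1 = i + 2 by ring] at this
      have hd3 : g i ≠ g (i + 2) := by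
        have := hsq (i + 1)
        rwa [show i + 1 - 1 = i by ring, show i + 1 + 1 = i + 2 by ring] at this
      have hsub3 : ({g i, g (i + 1), g (i + 2)} : Finset (Fin 5)) ⊆ U := by
        intro c hc
        simp only [Finset.mem_insert, Finset.mem_singleton] at hc
        rcases hc with rfl | rfl | rfl <;> exact hgU _
      have hcard3 : ({g i, g (i + 1), g (i + 2)} : Finset (Fin 5)).card = 3 := by
        rw [Finset.card_insert_of_notMem (by simp [hd1, hd3]),
          Finset.card_insert_of_notMem (by simp [hd2]), Finset.card_singleton]
      have hUeq : ({g i, g (i + 1), g (i + 2)} : Finset (Fin 5)) = U :=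
        Finset.eq_of_subset_of_card_le hsub3 (by omega)
      have hmem3 : g (i + 3) ∈ ({g i, g (i + 1), g (i + 2)} : Finset (Fin 5)) := by
        rw [hUeq]; exact hgU _
      have hne1 : g (i + 3) ≠ g (i + 2) := by
        have := hprop (i + 2)
        rw [show i + 2 + 1 = i + 3 by ring] at this
        exact this.symm
      have hne2 : g (i + 3) ≠ g (i + 1) := by
        have := hsq (i + 2)
        rw [show i + 2 - 1 = i + 1 by ring, show i + 2 + 1 = i + 3 by ring] at this
        exact this.symm
      simp only [Finset.mem_insert, Finset.mem_singleton] at hmem3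
      rcases hmem3 with h | h | h
      · exact h
      · exact absurd h hne2
      · exact absurd h hne1
    have hper : ∀ (t : ℕ) (i : Fin n), g (i + ((3 * t : ℕ) : Fin n)) = g i := by
      intro t
      induction t with
      | zero => intro i; simp
      | succ t ih =>
          intro i
          have hcast : ((3 * (t + 1) : ℕ) : Fin n) = ((3 * t : ℕ) : Fin n) + 3 := by
            push_cast; ring
          rw [hcast, ← add_assoc, hthree (i + ((3 * t : ℕ) : Fin n)), ih]
    have hcop : Nat.Coprime 3 n :=
      (Nat.Prime.coprime_iff_not_dvd (by norm_num)).mpr h3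
    obtain ⟨t, -, ht⟩ := Nat.exists_mul_mod_eq_one_of_coprime hcop (by omega)
    have hone : ((3 * t : ℕ) : Fin n) = 1 := by
      apply Fin.ext
      rw [Fin.val_natCast, ht, fin_val_one' (by omega)]
    have := hper t 0
    rw [hone] at this
    exact hprop 0 this.symm
end No5
section Exists6
open Finset SimpleGraph

lemma fcol_count (p L : ℕ) (t : ℕ → Fin 6) (v : Fin 6) :
    ((range (p + L)).filter (fun a => fcol p t a = v)).card
      = (∑ a ∈ range p, if pat a = v then 1 else 0)
        + ((range L).filter (fun j => t j = v)).card := by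
  classical
  rw [card_filter, Finset.sum_range_add, card_filter]
  congr 1
  · exact Finset.sum_congr rfl fun a ha => by rw [fcol_lt (mem_range.mp ha)]
  · exact Finset.sum_congr rfl fun j _ => by
      rw [fcol_ge (Nat.le_add_right p j), Nat.add_sub_cancel_left]

lemma exists6 (n p L : ℕ) (t : ℕ → Fin 6) (hn : n = p + L)
    (hp3 : p % 3 = 0) (hpe : (p / 3) % 2 = 0) (hp : 3 ≤ p) (hL : 2 ≤ L)
    (ht1 : ∀ j, j + 1 < L → t j ≠ t (j + 1))
    (ht2 : ∀ j, j + 2 < L → t j ≠ t (j + 2))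
    (hb1 : t 0 ≠ 2) (hb2 : t 0 ≠ 1) (hb3 : t 1 ≠ 2)
    (hb4 : t (L - 1) ≠ 0) (hb5 : t (L - 1) ≠ 1) (hb6 : t (L - 2) ≠ 0)
    (ht5 : ∀ j < L, t j ≠ 5)
    (hcA : ∀ v : Fin 6, v.val < 3 → Odd ((range L).filter (fun j => t j = v)).card)
    (hcB : ∀ v : Fin 6, 3 ≤ v.val → v.val < 5 →
      ((range L).filter (fun j => t j = v)).card = 0 ∨
        Odd ((range L).filter (fun j => t j = v)).card) :
    ∃ φ : Fin n ⊕ Fin 1 → Fin 6, IsStrongOddColoring (wheelGraph n) φ := by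
  classical
  subst hn
  refine ⟨_, assemble (p + L) (by omega) (fcol p t)
    (gen_P1 p L t hp3 hp hL ht1 hb1 hb4)
    (gen_P2 p L t hp3 hp hL ht2 hb2 hb3 hb6 hb5) ?_ ?_⟩
  · intro a ha
    by_cases h : a < p
    · rw [fcol_lt h]
      unfold pat
      split_ifs <;> decide
    · rw [fcol_ge (by omega)]
      exact ht5 (a - p) (by omega)
  · intro v
    rw [fcol_count]
    rw [show p = 3 * (p / 3) from by omega, pat_count]
    set m := p / 3 with hm
    set tc := ((range L).filter (fun j => t j = v)).card with htc
    by_cases h5 : v = 5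
    · left
      subst h5
      have h0 : (∑ r ∈ range 3, if pat r = (5 : Fin 6) then 1 else 0) = 0 := by decide
      have h1 : tc = 0 := by
        rw [htc, Finset.card_eq_zero, Finset.filter_eq_empty_iff]
        intro j hj
        exact ht5 j (mem_range.mp hj)
      rw [h0, h1]
      simp
    · by_cases h3 : v.val < 3
      · right
        have he : (∑ r ∈ range 3, if pat r = v then 1 else 0) = 1 := by
          have : v = 0 ∨ v = 1 ∨ v = 2 := by
            have h0 : (0 : Fin 6).val = 0 := rfl
            have h1 : (1 : Fin 6).val = 1 := rfl
            have h2 : (2 : Fin 6).val = 2 := rfl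
            simp only [Fin.ext_iff, h0, h1, h2]
            omega
          rcases this with rfl | rfl | rfl <;> decide
        have ho := hcA v h3
        rw [← htc] at ho
        rw [he, Nat.odd_iff]
        rw [Nat.odd_iff] at ho
        omega
      · have hv5 : v.val < 5 := by
          rcases v with ⟨vv, hvv⟩
          simp only [Fin.ext_iff] at h5
          simp at h5 ⊢
          omega
        have he : (∑ r ∈ range 3, if pat r = v then 1 else 0) = 0 := by
          have : v = 3 ∨ v = 4 := by
            have h33 : (3 : Fin 6).val = 3 := rfl
            have h44 : (4 : Fin 6).val = 4 := rfl
            simp only [Fin.ext_iff, h33, h44]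
            omega
          rcases this with rfl | rfl <;> decide
        rw [he, Nat.mul_zero, Nat.zero_add]
        exact hcB v (by omega) hv5

end Exists6
def tailA : ℕ → Fin 6
  | 0 => 0 | 1 => 3 | 2 => 1 | 3 => 2 | _ => 4

def tailB : ℕ → Fin 6
  | 0 => 4 | 1 => 0 | 2 => 1 | 3 => 4 | 4 => 2 | 5 => 3 | _ => 4

/-- If `n > 8` and `n ≡ 1` or `5 (mod 6)`, then the strong odd chromatic number of the
wheel `W_n = C_n ∨ K_1` equals `6`. -/
theorem stmt_5 (n : ℕ) (hn : 8 < n) (hmod : n % 6 = 1 ∨ n % 6 = 5) :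
    strongOddChromaticNumber (wheelGraph n) = 6 := by
  have h3 : ¬ 3 ∣ n := by omega
  have hodd : n % 2 = 1 := by omega
  have h6 : ∃ φ : Fin n ⊕ Fin 1 → Fin 6, IsStrongOddColoring (wheelGraph n) φ := by
    rcases hmod with h | h
    · exact exists6 n (n - 7) 7 tailB (by omega) (by omega) (by omega) (by omega) (by omega)
        (fun j hj => by have hj' : j < 6 := by omega
                        interval_cases j <;> first | decide | omega)
        (fun j hj => by have hj' : j < 6 := by omega
                        interval_cases j <;> first | decide | omega)
        (by decide) (by decide) (by decide) (by decide) (by decide) (by decide)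
        (fun j hj => by interval_cases j <;> first | decide | omega)
        (by decide) (by decide)
    · exact exists6 n (n - 5) 5 tailA (by omega) (by omega) (by omega) (by omega) (by omega)
        (fun j hj => by have hj' : j < 6 := by omega
                        interval_cases j <;> first | decide | omega)
        (fun j hj => by have hj' : j < 6 := by omega
                        interval_cases j <;> first | decide | omega)
        (by decide) (by decide) (by decide) (by decide) (by decide) (by decide)
        (fun j hj => by interval_cases j <;> first | decide | omega)
        (by decide) (by decide)
  have h5 := no5 n hn hodd h3
  have hmem : 6 ∈ {k : ℕ | ∃ φ : Fin n ⊕ Fin 1 → Fin k,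
      IsStrongOddColoring (wheelGraph n) φ} := h6
  refine le_antisymm (Nat.sInf_le hmem) (le_csInf ⟨6, hmem⟩ ?_)
  intro k hk
  by_contra hlt
  push_neg at hlt
  apply h5
  obtain ⟨φ, hφ⟩ := hk
  exact ⟨(Fin.castLE (by omega : k ≤ 5)) ∘ φ,
    soc_comp_inj _ _ _ (Fin.castLE_injective _) hφ⟩
end

section
/- For n ≥ 3 and m ≥ 1, if m is odd then χ_so(C_n ∨ K̄_m) = χ_so(W_n), and if m is even then χ_so(C_n ∨ K̄_m) = χ_so(W_n) + 1, where W_n = C_n ∨ K_1. -/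
open SimpleGraph

section SOCAux

variable {V : Type*}

lemma joinGraph_adj_inl_inr' {W : Type*} (G : SimpleGraph V) (H : SimpleGraph W) (a : V) (i : W) :
    (joinGraph G H).Adj (Sum.inl a) (Sum.inr i) := trivial

lemma joinGraph_adj_inr_inr' {W : Type*} (G : SimpleGraph V) (H : SimpleGraph W) (i j : W) :
    (joinGraph G H).Adj (Sum.inr i) (Sum.inr j) ↔ H.Adj i j := Iff.rfl

/-- The decomposed form of being a strong odd coloring of `G ∨ K̄_m`. -/
def GoodPair (G : SimpleGraph V) (m k : ℕ) (φL : V → Fin k) (φR : Fin m → Fin k) : Prop :=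
  (∀ a b, G.Adj a b → φL a ≠ φL b) ∧
  (∀ a i, φL a ≠ φR i) ∧
  (∀ c, {a | φL a = c}.ncard = 0 ∨ Odd {a | φL a = c}.ncard) ∧
  (∀ a c, {b | G.Adj a b ∧ φL b = c}.ncard = 0 ∨ Odd {b | G.Adj a b ∧ φL b = c}.ncard) ∧
  (∀ c, {i | φR i = c}.ncard = 0 ∨ Odd {i | φR i = c}.ncard)

lemma set_inr (G : SimpleGraph V) {m k : ℕ} (φ : V ⊕ Fin m → Fin k) (i : Fin m) (c : Fin k) :
    {u | (joinGraph G (⊥ : SimpleGraph (Fin m))).Adj (Sum.inr i) u ∧ φ u = c}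
      = Sum.inl '' {a | φ (Sum.inl a) = c} := by
  ext u
  cases u with
  | inl a =>
    simp only [Set.mem_setOf_eq, Set.mem_image]
    exact ⟨fun h => ⟨a, h.2, rfl⟩, fun ⟨b, hb, hba⟩ => by
      cases hba; exact ⟨trivial, hb⟩⟩
  | inr j =>
    simp only [Set.mem_setOf_eq, Set.mem_image]
    constructor
    · rintro ⟨h, -⟩; exact absurd h (by simp [joinGraph_adj_inr_inr'])
    · rintro ⟨b, -, h⟩; exact absurd h (by simp)

lemma set_inl (G : SimpleGraph V) {m k : ℕ} (φ : V ⊕ Fin m → Fin k) (a : V) (c : Fin k) :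
    {u | (joinGraph G (⊥ : SimpleGraph (Fin m))).Adj (Sum.inl a) u ∧ φ u = c}
      = Sum.inl '' {b | G.Adj a b ∧ φ (Sum.inl b) = c} ∪ Sum.inr '' {i | φ (Sum.inr i) = c} := by
  ext u
  cases u with
  | inl b =>
    simp only [Set.mem_setOf_eq, Set.mem_union, Set.mem_image]
    constructor
    · rintro ⟨h1, h2⟩; exact Or.inl ⟨b, ⟨h1, h2⟩, rfl⟩
    · rintro (⟨b', ⟨h1, h2⟩, hb⟩ | ⟨i, -, hi⟩)
      · cases hb; exact ⟨h1, h2⟩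
      · exact absurd hi (by simp)
  | inr i =>
    simp only [Set.mem_setOf_eq, Set.mem_union, Set.mem_image]
    constructor
    · rintro ⟨-, h2⟩; exact Or.inr ⟨i, h2, rfl⟩
    · rintro (⟨b', -, hb⟩ | ⟨i', hi', h⟩)
      · exact absurd hb (by simp)
      · cases h; exact ⟨trivial, hi'⟩

lemma ncard_inl_union_inr [Finite V] {m : ℕ} (S : Set V) (T : Set (Fin m)) :
    (Sum.inl '' S ∪ Sum.inr '' T : Set (V ⊕ Fin m)).ncard = S.ncard + T.ncard := by
  rw [Set.ncard_union_eq ?_ (Set.toFinite _) (Set.toFinite _),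
    Set.ncard_image_of_injective _ Sum.inl_injective,
    Set.ncard_image_of_injective _ Sum.inr_injective]
  rw [Set.disjoint_left]
  rintro x ⟨b, -, rfl⟩ ⟨i, -, h⟩
  exact absurd h (by simp)

lemma isStrongOdd_join_iff [Finite V] [Nonempty V] (G : SimpleGraph V) {m k : ℕ}
    (hm : 1 ≤ m) (φ : V ⊕ Fin m → Fin k) :
    IsStrongOddColoring (joinGraph G (⊥ : SimpleGraph (Fin m))) φ ↔
      GoodPair G m k (fun a => φ (Sum.inl a)) (fun i => φ (Sum.inr i)) := by
  constructor
  · rintro ⟨hp, hc⟩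
    have hB : ∀ a i, φ (Sum.inl a) ≠ φ (Sum.inr i) := fun a i =>
      hp _ _ (joinGraph_adj_inl_inr' G _ a i)
    refine ⟨fun a b hab => hp _ _ hab, hB, ?_, ?_, ?_⟩
    · intro c
      have hc' := hc (Sum.inr ⟨0, hm⟩) c
      rwa [set_inr, Set.ncard_image_of_injective _ Sum.inl_injective] at hc'
    · intro a c
      have hc' := hc (Sum.inl a) c
      rw [set_inl, ncard_inl_union_inr] at hc'
      rcases Set.eq_empty_or_nonempty {b | G.Adj a b ∧ φ (Sum.inl b) = c} with hS | ⟨b, hb⟩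
      · left; simp [hS]
      · have hT : {i : Fin m | φ (Sum.inr i) = c} = ∅ := by
          ext i; simp only [Set.mem_setOf_eq, Set.mem_empty_iff_false, iff_false]
          intro hi; exact hB b i (hb.2.trans hi.symm)
        rwa [hT, Set.ncard_empty, add_zero] at hc'
    · intro c
      rcases Set.eq_empty_or_nonempty {i : Fin m | φ (Sum.inr i) = c} with hT | ⟨i, hi⟩
      · left; simp [hT]
      · obtain ⟨a⟩ := ‹Nonempty V›
        have hc' := hc (Sum.inl a) c
        rw [set_inl, ncard_inl_union_inr] at hc'
        have hS : {b | G.Adj a b ∧ φ (Sum.inl b) = c} = ∅ := by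
          ext b; simp only [Set.mem_setOf_eq, Set.mem_empty_iff_false, iff_false]
          rintro ⟨-, hb⟩; exact hB b i (hb.trans hi.symm)
        rwa [hS, Set.ncard_empty, zero_add] at hc'
  · rintro ⟨hA, hB, hC, hD, hE⟩
    constructor
    · rintro (a | i) (b | j) h
      · exact hA a b h
      · exact hB a j
      · exact fun he => hB b i he.symm
      · exact absurd h (by simp [joinGraph_adj_inr_inr'])
    · rintro (a | i) c
      · rw [set_inl, ncard_inl_union_inr]
        rcases Set.eq_empty_or_nonempty {b | G.Adj a b ∧ φ (Sum.inl b) = c} with hS | ⟨b, hb⟩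
        · rw [hS, Set.ncard_empty, zero_add]; exact hE c
        · have hT : {i : Fin m | φ (Sum.inr i) = c} = ∅ := by
            ext j; simp only [Set.mem_setOf_eq, Set.mem_empty_iff_false, iff_false]
            intro hj; exact hB b j (hb.2.trans hj.symm)
          rw [hT, Set.ncard_empty, add_zero]; exact hD a c
      · rw [set_inr, Set.ncard_image_of_injective _ Sum.inl_injective]; exact hC c

lemma GoodPair.const {G : SimpleGraph V} {m k : ℕ} {φL : V → Fin k} {φR : Fin m → Fin k}
    (h : GoodPair G m k φL φR) (i₀ : Fin m) (m' : ℕ) (hm' : Odd m') :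
    GoodPair G m' k φL (fun _ => φR i₀) := by
  obtain ⟨A, B, C, D, E⟩ := h
  refine ⟨A, fun a _ => B a i₀, C, D, fun c => ?_⟩
  by_cases hc : φR i₀ = c
  · right
    have huniv : {i : Fin m' | (fun _ => φR i₀) i = c} = Set.univ := by
      ext i; simpa using hc
    rw [huniv, Set.ncard_univ, Nat.card_eq_fintype_card, Fintype.card_fin]
    exact hm'
  · left
    have he : {i : Fin m' | (fun _ => φR i₀) i = c} = ∅ := by
      ext i; simpa using hc
    rw [he, Set.ncard_empty]

lemma GoodPair.extend {G : SimpleGraph V} {k m : ℕ} (hm : Even m) (hm1 : 1 ≤ m)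
    {φL : V → Fin k} {φR : Fin 1 → Fin k} (h : GoodPair G 1 k φL φR) :
    GoodPair G m (k + 1) (fun a => (φL a).castSucc)
      (fun i => if i.val = 0 then Fin.last k else (φR 0).castSucc) := by
  obtain ⟨A, B, C, D, E⟩ := h
  have hcl : ∀ c' : Fin k, c'.castSucc ≠ Fin.last k := fun c' => (Fin.castSucc_lt_last c').ne
  refine ⟨?_, ?_, ?_, ?_, ?_⟩
  · intro a b hab he
    exact A a b hab (Fin.castSucc_injective k he)
  · intro a i
    dsimp only
    by_cases hi : i.val = 0
    · rw [if_pos hi]; exact hcl (φL a)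
    · rw [if_neg hi]; exact fun he => B a 0 (Fin.castSucc_injective k he)
  · intro c
    rcases Fin.eq_castSucc_or_eq_last c with ⟨c', rfl⟩ | rfl
    · have hs : {a | (fun a => (φL a).castSucc) a = c'.castSucc} = {a | φL a = c'} := by
        ext a; simp [Fin.castSucc_inj]
      rw [hs]; exact C c'
    · left
      have hs : {a | (fun a => (φL a).castSucc) a = Fin.last k} = ∅ := by
        ext a; simpa using hcl (φL a)
      rw [hs, Set.ncard_empty]
  · intro a c
    rcases Fin.eq_castSucc_or_eq_last c with ⟨c', rfl⟩ | rfl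
    · have hs : {b | G.Adj a b ∧ (fun a => (φL a).castSucc) b = c'.castSucc}
          = {b | G.Adj a b ∧ φL b = c'} := by
        ext b; simp [Fin.castSucc_inj]
      rw [hs]; exact D a c'
    · left
      have hs : {b | G.Adj a b ∧ (fun a => (φL a).castSucc) b = Fin.last k} = ∅ := by
        ext b; simpa using fun _ => hcl (φL b)
      rw [hs, Set.ncard_empty]
  · intro c
    by_cases hlast : c = Fin.last k
    · subst hlast
      right
      have hs : {i : Fin m |
          (fun i : Fin m => if i.val = 0 then Fin.last k else (φR 0).castSucc) i = Fin.last k}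
          = {(⟨0, hm1⟩ : Fin m)} := by
        ext i
        by_cases hi : i.val = 0
        · simp only [Set.mem_setOf_eq, if_pos hi, Set.mem_singleton_iff]
          simp [Fin.ext_iff, hi]
        · simp only [Set.mem_setOf_eq, if_neg hi, Set.mem_singleton_iff]
          constructor
          · intro hcon; exact absurd hcon (hcl (φR 0))
          · intro hcon; exact absurd (congrArg Fin.val hcon) hi
      rw [hs, Set.ncard_singleton]; exact odd_one
    · by_cases hc : c = (φR 0).castSucc
      · subst hc
        right
        have hs : {i : Fin m |
            (fun i : Fin m => if i.val = 0 then Fin.last k else (φR 0).castSucc) i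
              = (φR 0).castSucc} = {i : Fin m | i.val ≠ 0} := by
          ext i
          by_cases hi : i.val = 0
          · simp only [Set.mem_setOf_eq, if_pos hi]
            constructor
            · intro hcon; exact absurd hcon.symm (hcl (φR 0))
            · intro hcon; exact absurd hi hcon
          · simp [hi]
        rw [hs]
        have h0 : (⟨0, hm1⟩ : Fin m) ∉ {i : Fin m | i.val ≠ 0} := by simp
        have hins := Set.ncard_insert_of_notMem h0 (Set.toFinite _)
        have huniv : insert (⟨0, hm1⟩ : Fin m) {i : Fin m | i.val ≠ 0} = Set.univ := by
          ext i
          by_cases hi : i.val = 0 <;>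
            simp [Set.mem_insert_iff, Fin.ext_iff, hi]
        rw [huniv, Set.ncard_univ, Nat.card_eq_fintype_card, Fintype.card_fin] at hins
        have hodd : Odd (m - 1) := Nat.Even.sub_odd hm1 hm odd_one
        have hcard : {i : Fin m | i.val ≠ 0}.ncard = m - 1 := by omega
        rw [hcard]; exact hodd
      · left
        have hs : {i : Fin m |
            (fun i : Fin m => if i.val = 0 then Fin.last k else (φR 0).castSucc) i = c} = ∅ := by
          ext i
          by_cases hi : i.val = 0
          · simp only [Set.mem_setOf_eq, if_pos hi, Set.mem_empty_iff_false, iff_false]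
            exact fun hcon => hlast hcon.symm
          · simp only [Set.mem_setOf_eq, if_neg hi, Set.mem_empty_iff_false, iff_false]
            exact fun hcon => hc hcon.symm
        rw [hs, Set.ncard_empty]

lemma exists_ne_of_even {G : SimpleGraph V} {m k : ℕ} (hm : Even m) (hm1 : 1 ≤ m)
    {φL : V → Fin k} {φR : Fin m → Fin k} (h : GoodPair G m k φL φR) :
    ∃ i j, φR i ≠ φR j := by
  by_contra hcon
  push_neg at hcon
  have huniv : {i : Fin m | φR i = φR ⟨0, hm1⟩} = Set.univ := by
    ext i; simpa using hcon i ⟨0, hm1⟩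
  have hE := h.2.2.2.2 (φR ⟨0, hm1⟩)
  rw [huniv, Set.ncard_univ, Nat.card_eq_fintype_card, Fintype.card_fin] at hE
  rw [Nat.even_iff] at hm
  rcases hE with h0 | hodd
  · omega
  · rw [Nat.odd_iff] at hodd; omega

lemma isStrongOdd_of_colorEquiv {V' α β : Type*} {G' : SimpleGraph V'} {φ : V' → α}
    {ψ : V' → β} (h : ∀ u w, ψ u = ψ w ↔ φ u = φ w)
    (hφ : IsStrongOddColoring G' φ) : IsStrongOddColoring G' ψ := by
  constructor
  · exact fun u v huv hq => hφ.1 u v huv ((h u v).1 hq)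
  · intro v c
    rcases Set.eq_empty_or_nonempty {u | G'.Adj v u ∧ ψ u = c} with he | ⟨u₀, hu₀⟩
    · left; simp [he]
    · have hs : {u | G'.Adj v u ∧ ψ u = c} = {u | G'.Adj v u ∧ φ u = φ u₀} := by
        ext u
        refine ⟨fun ⟨h1, h2⟩ => ⟨h1, (h u u₀).1 (h2.trans hu₀.2.symm)⟩,
          fun ⟨h1, h2⟩ => ⟨h1, ((h u u₀).2 h2).trans hu₀.2⟩⟩
      rw [hs]; exact hφ.2 v (φ u₀)

lemma compress {V' : Type*} {G' : SimpleGraph V'} {j : ℕ}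
    {φ : V' → Fin (j + 1)} (hφ : IsStrongOddColoring G' φ) (c₀ : Fin (j + 1))
    (hc₀ : ∀ v, φ v ≠ c₀) : ∃ ψ : V' → Fin j, IsStrongOddColoring G' ψ := by
  set e := finSuccEquiv' c₀ with he
  have hsome : ∀ v, ∃ a, e (φ v) = some a := by
    intro v
    rcases h' : e (φ v) with _ | a
    · exact absurd (e.injective (h'.trans (finSuccEquiv'_at c₀).symm)) (hc₀ v)
    · exact ⟨a, rfl⟩
  choose f hf using hsome
  refine ⟨f, isStrongOdd_of_colorEquiv (fun u w => ?_) hφ⟩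
  constructor
  · intro h1
    have h2 : e (φ u) = e (φ w) := by rw [hf u, hf w, h1]
    exact e.injective h2
  · intro h1
    have h2 := hf u
    rw [h1, hf w] at h2
    exact (Option.some_injective _ h2).symm

lemma exists_strongOdd_card {V' : Type*} [Fintype V'] (G' : SimpleGraph V') :
    ∃ φ : V' → Fin (Fintype.card V'), IsStrongOddColoring G' φ := by
  refine ⟨Fintype.equivFin V', fun u v huv h => huv.ne ((Fintype.equivFin V').injective h), ?_⟩
  intro v c
  rcases Set.eq_empty_or_nonempty {u | G'.Adj v u ∧ (Fintype.equivFin V') u = c}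
    with he | ⟨u₀, hu₀⟩
  · left; simp [he]
  · right
    have hs : {u | G'.Adj v u ∧ (Fintype.equivFin V') u = c} = {u₀} := by
      ext u
      constructor
      · rintro ⟨-, h2⟩
        exact (Fintype.equivFin V').injective (h2.trans hu₀.2.symm)
      · rintro rfl; exact hu₀
    rw [hs, Set.ncard_singleton]; exact odd_one

end SOCAux

/-- For `n ≥ 3` and `m ≥ 1`: if `m` is odd then
`χ_so(C_n ∨ K̄_m) = χ_so(W_n)`, and if `m` is even then
`χ_so(C_n ∨ K̄_m) = χ_so(W_n) + 1`. -/
theorem stmt_8 (n m : ℕ) (hn : 3 ≤ n) (hm : 1 ≤ m) :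
    (Odd m →
      strongOddChromaticNumber (joinGraph (cycleGraph n) (⊥ : SimpleGraph (Fin m))) =
        strongOddChromaticNumber (wheelGraph n)) ∧
    (Even m →
      strongOddChromaticNumber (joinGraph (cycleGraph n) (⊥ : SimpleGraph (Fin m))) =
        strongOddChromaticNumber (wheelGraph n) + 1) := by
  haveI : Nonempty (Fin n) := ⟨⟨0, by omega⟩⟩
  set Gc := cycleGraph n with hGc
  -- membership sets
  have hWdef : strongOddChromaticNumber (wheelGraph n)
      = sInf {k : ℕ | ∃ φ : Fin n ⊕ Fin 1 → Fin k,
          IsStrongOddColoring (joinGraph Gc (⊥ : SimpleGraph (Fin 1))) φ} := rfl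
  have hGdef : strongOddChromaticNumber (joinGraph Gc (⊥ : SimpleGraph (Fin m)))
      = sInf {k : ℕ | ∃ φ : Fin n ⊕ Fin m → Fin k,
          IsStrongOddColoring (joinGraph Gc (⊥ : SimpleGraph (Fin m))) φ} := rfl
  set SW := {k : ℕ | ∃ φ : Fin n ⊕ Fin 1 → Fin k,
      IsStrongOddColoring (joinGraph Gc (⊥ : SimpleGraph (Fin 1))) φ} with hSW
  set SG := {k : ℕ | ∃ φ : Fin n ⊕ Fin m → Fin k,
      IsStrongOddColoring (joinGraph Gc (⊥ : SimpleGraph (Fin m))) φ} with hSG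
  constructor
  · -- odd case
    intro hodd
    rw [hGdef, hWdef]
    congr 1
    ext k
    constructor
    · rintro ⟨φ, hφ⟩
      rw [isStrongOdd_join_iff Gc hm φ] at hφ
      have hg := hφ.const ⟨0, hm⟩ 1 odd_one
      exact ⟨Sum.elim (fun a => φ (Sum.inl a)) (fun _ => φ (Sum.inr ⟨0, hm⟩)),
        (isStrongOdd_join_iff Gc le_rfl _).2 hg⟩
    · rintro ⟨φ, hφ⟩
      rw [isStrongOdd_join_iff Gc le_rfl φ] at hφ
      have hg := hφ.const 0 m hodd
      exact ⟨Sum.elim (fun a => φ (Sum.inl a)) (fun _ => φ (Sum.inr 0)),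
        (isStrongOdd_join_iff Gc hm _).2 hg⟩
  · -- even case
    intro heven
    rw [hGdef, hWdef]
    -- SW is nonempty
    have hWne : SW.Nonempty := by
      obtain ⟨φ, hφ⟩ := exists_strongOdd_card (joinGraph Gc (⊥ : SimpleGraph (Fin 1)))
      exact ⟨_, φ, hφ⟩
    set w := sInf SW with hw
    have hwmem : w ∈ SW := Nat.sInf_mem hWne
    -- upper bound : w + 1 ∈ SG
    have hup : w + 1 ∈ SG := by
      obtain ⟨φ, hφ⟩ := hwmem
      rw [isStrongOdd_join_iff Gc le_rfl φ] at hφ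
      have hg := hφ.extend heven hm
      exact ⟨Sum.elim (fun a => (φ (Sum.inl a)).castSucc)
          (fun i => if i.val = 0 then Fin.last w else (φ (Sum.inr 0)).castSucc),
        (isStrongOdd_join_iff Gc hm _).2 hg⟩
    -- lower bound : every k ∈ SG satisfies k ≥ 2 and k - 1 ∈ SW
    have hdown : ∀ k ∈ SG, 2 ≤ k ∧ k - 1 ∈ SW := by
      rintro k ⟨φ, hφ⟩
      rw [isStrongOdd_join_iff Gc hm φ] at hφ
      obtain ⟨i, j, hij⟩ := exists_ne_of_even heven hm hφ
      have hk2 : 2 ≤ k := by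
        have h1 := (φ (Sum.inr i)).isLt
        have h2 := (φ (Sum.inr j)).isLt
        have h3 : (φ (Sum.inr i)).val ≠ (φ (Sum.inr j)).val := fun h => hij (Fin.ext h)
        omega
      refine ⟨hk2, ?_⟩
      -- a wheel coloring with color  φ (Sum.inr j)  unused
      have hg := hφ.const i 1 odd_one
      set φ' : Fin n ⊕ Fin 1 → Fin k :=
        Sum.elim (fun a => φ (Sum.inl a)) (fun _ => φ (Sum.inr i)) with hφ'
      have hφ'so : IsStrongOddColoring (joinGraph Gc (⊥ : SimpleGraph (Fin 1))) φ' :=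
        (isStrongOdd_join_iff Gc le_rfl _).2 hg
      have hmiss : ∀ v, φ' v ≠ φ (Sum.inr j) := by
        rintro (a | i')
        · exact hφ.2.1 a j
        · exact hij
      obtain ⟨k', rfl⟩ : ∃ k', k = k' + 1 := ⟨k - 1, by omega⟩
      obtain ⟨ψ, hψ⟩ := compress hφ'so (φ (Sum.inr j)) hmiss
      exact ⟨ψ, hψ⟩
    have hGne : SG.Nonempty := ⟨w + 1, hup⟩
    have hgmem : sInf SG ∈ SG := Nat.sInf_mem hGne
    obtain ⟨hg2, hgW⟩ := hdown _ hgmem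
    have hle : sInf SG ≤ w + 1 := Nat.sInf_le hup
    have hge : w ≤ sInf SG - 1 := Nat.sInf_le hgW
    omega
end
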